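/- (Uniqueness of Ψ in the proof of Theorem 2.) Fix α ∈ (0,1), let W^α be the unique real number with ω(W^α) = α, and set ω̃(x) := ω(W^α + x). Then the function Ψ(x) = ω̃'(x) e^x ∫₀^x (ω̃'(y)² e^{2y})^{−1} (∫_{−∞}^y ω̃'(z)² e^{2z} dz) dy is the unique function satisfying Ψ''(x) − 2ω̃(x)Ψ(x) = ω̃'(x) e^x for all x ∈ ℝ, Ψ(0) = 0, and Ψ bounded on (−∞, 0]. Moreover Ψ(x) = e^x [ Φ(W^α + x) − (Φ(W^α)/ω'(W^α)) ω'(W^α + x) ], where Φ(x) = ω'(x) ∫₀^x (e^{−2y}/ω'(y)²) (∫_{−∞}^y ω'(z)² e^{2z} dz) dy. -/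

import Mathlib

open Filter Asymptotics MeasureTheory intervalIntegral Set Real

namespace S17


structure Hyp (ω : ℝ → ℝ) : Prop where
  smooth : ContDiff ℝ 2 ω
  eq : ∀ x, deriv (deriv ω) x + 2 * deriv ω x + ω x - (ω x) ^ 2 = 0
  bot : Tendsto ω atBot (nhds 1)
  top : Tendsto ω atTop (nhds 0)
  dneg : ∀ x, deriv ω x < 0

variable {ω : ℝ → ℝ}

lemma Hyp.d1 (h : Hyp ω) : Differentiable ℝ ω := h.smooth.differentiable two_ne_zero

lemma Hyp.cd1 (h : Hyp ω) : ContDiff ℝ 1 (deriv ω) :=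
  ((contDiff_succ_iff_deriv (n := 1)).mp (by exact_mod_cast h.smooth)).2.2

lemma Hyp.d2 (h : Hyp ω) : Differentiable ℝ (deriv ω) :=
  h.cd1.differentiable one_ne_zero

lemma Hyp.dd_eq (h : Hyp ω) :
    deriv (deriv ω) = fun x => (ω x) ^ 2 - ω x - 2 * deriv ω x :=
  funext fun x => by linarith [h.eq x]

lemma Hyp.d3 (h : Hyp ω) : Differentiable ℝ (deriv (deriv ω)) := by
  rw [h.dd_eq]
  exact (h.d1.pow 2).sub h.d1 |>.sub (h.d2.const_mul 2)

lemma Hyp.anti (h : Hyp ω) : StrictAnti ω :=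
  strictAnti_of_deriv_neg h.dneg

lemma Hyp.lt_one (h : Hyp ω) : ∀ x, ω x < 1 := by
  intro x
  have h1 : ω (x - 1) ≤ 1 := by
    refine ge_of_tendsto h.bot ?_
    filter_upwards [Iic_mem_atBot (x - 1)] with y hy
    exact (h.anti.antitone hy)
  linarith [h.anti (show x - 1 < x by linarith)]

lemma Hyp.pos (h : Hyp ω) : ∀ x, 0 < ω x := by
  intro x
  have h1 : 0 ≤ ω (x + 1) := by
    refine le_of_tendsto h.top ?_
    filter_upwards [Ici_mem_atTop (x + 1)] with y hy
    exact (h.anti.antitone hy)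
  linarith [h.anti (show x < x + 1 by linarith)]


lemma Hyp.s_hasDeriv (h : Hyp ω) (x : ℝ) :
    HasDerivAt (fun y => -deriv ω y / (1 - ω y))
      (-((-deriv ω x / (1 - ω x)) ^ 2 + 2 * (-deriv ω x / (1 - ω x)) - ω x)) x := by
  have h1 : 1 - ω x ≠ 0 := by have := h.lt_one x; intro hh; linarith [(by linarith : ω x = 1)]
  have hA : HasDerivAt (fun y => -deriv ω y) (-((ω x) ^ 2 - ω x - 2 * deriv ω x)) x := by
    have := ((h.d2 x).hasDerivAt).neg
    simp only [h.dd_eq] at this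
    exact this
  have hB : HasDerivAt (fun y => 1 - ω y) (-deriv ω x) x := ((h.d1 x).hasDerivAt).const_sub 1
  have hD := hA.fun_div hB h1
  refine hD.congr_deriv (Eq.symm ?_)
  field_simp
  ring

lemma Hyp.s_cont (h : Hyp ω) : Continuous (fun y => -deriv ω y / (1 - ω y)) := by
  refine (h.d2.continuous.neg).div (continuous_const.sub h.d1.continuous) ?_
  intro y hh
  have h1 := h.lt_one y
  have h2 : (1:ℝ) = ω y := sub_eq_zero.mp hh
  linarith

lemma Hyp.dbound (h : Hyp ω) (x : ℝ) : -deriv ω x ≤ 2 / 3 * (1 - ω x) := by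
  set s : ℝ → ℝ := fun y => -deriv ω y / (1 - ω y) with hsdef
  have hone : ∀ y, 0 < 1 - ω y := fun y => by linarith [h.lt_one y]
  have spos : ∀ y, 0 < s y := fun y => div_pos (by linarith [h.dneg y]) (hone y)
  have scont : Continuous s := h.s_cont
  suffices hmain : s x ≤ 2 / 3 by
    rw [hsdef] at hmain
    simp only [div_le_iff₀ (hone x)] at hmain
    linarith
  by_contra hcon
  push_neg at hcon
  have stepA : ∀ y ≤ x, 2 / 3 < s y := by
    by_contra hA
    push_neg at hA
    obtain ⟨y₀, hy₀x, hy₀⟩ := hA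
    set T : Set ℝ := Iic x ∩ {y | s y ≤ 2 / 3} with hT
    have hTne : T.Nonempty := ⟨y₀, hy₀x, hy₀⟩
    have hTbdd : BddAbove T := ⟨x, fun z hz => hz.1⟩
    have hTclosed : IsClosed T :=
      isClosed_Iic.inter (isClosed_le scont continuous_const)
    have htT : sSup T ∈ T := hTclosed.csSup_mem hTne hTbdd
    set t := sSup T with htdef
    have htx : t < x := lt_of_le_of_ne htT.1 (fun he => by
      have h2' : s t ≤ 2 / 3 := htT.2; rw [he] at h2'; linarith)
    have hgt : ∀ z, t < z → z ≤ x → 2 / 3 < s z := by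
      intro z hz1 hz2
      by_contra hz3; push_neg at hz3
      exact absurd (le_csSup hTbdd ⟨hz2, hz3⟩) (not_le.mpr hz1)
    obtain ⟨c, hc1, hc2⟩ := exists_hasDerivAt_eq_slope s
      (fun y => -((s y) ^ 2 + 2 * s y - ω y)) htx scont.continuousOn
      (fun z _ => h.s_hasDeriv z)
    have hsc : 2 / 3 < s c := hgt c hc1.1 hc1.2.le
    have hwc : ω c < 1 := h.lt_one c
    have hslope : (s x - s t) / (x - t) < 0 := by
      rw [← hc2]; nlinarith [spos c]
    have hnum : s x - s t < 0 := by
      by_contra hnn; push_neg at hnn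
      have : 0 ≤ (s x - s t) / (x - t) := div_nonneg hnn (by linarith)
      linarith
    have h2' : s t ≤ 2 / 3 := htT.2
    linarith
  have stepB : ∀ y ≤ x, 2 / 3 + 7 / 9 * (x - y) ≤ s y := by
    intro y hy
    rcases eq_or_lt_of_le hy with rfl | hlt
    · simp; linarith
    obtain ⟨c, hc1, hc2⟩ := exists_hasDerivAt_eq_slope s
      (fun y => -((s y) ^ 2 + 2 * s y - ω y)) hlt scont.continuousOn
      (fun z _ => h.s_hasDeriv z)
    have hsc : 2 / 3 < s c := stepA c hc1.2.le
    have hwc : ω c < 1 := h.lt_one c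
    have hslope : (s x - s y) / (x - y) ≤ -(7 / 9) := by
      rw [← hc2]; nlinarith [sq_nonneg (s c - 2 / 3)]
    rw [div_le_iff₀ (by linarith)] at hslope
    nlinarith
  have hs3 : ∀ y ≤ x - 3, 3 ≤ s y := by
    intro y hy
    have := stepB y (by linarith)
    nlinarith
  set r : ℝ → ℝ := fun y => (s y)⁻¹ with hrdef
  have hr' : ∀ y, HasDerivAt r (((s y) ^ 2 + 2 * s y - ω y) / (s y) ^ 2) y := by
    intro y
    have hd0 : deriv ω y ≠ 0 := ne_of_lt (h.dneg y)
    have h10 : 1 - ω y ≠ 0 := ne_of_gt (hone y)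
    have := (h.s_hasDeriv y).fun_inv (ne_of_gt (spos y))
    refine this.congr_deriv (Eq.symm ?_)
    simp only [hsdef]
    field_simp
  have hrc : Continuous r := scont.inv₀ fun y => ne_of_gt (spos y)
  obtain ⟨c, hc1, hc2⟩ := exists_hasDerivAt_eq_slope r
    (fun y => ((s y) ^ 2 + 2 * s y - ω y) / (s y) ^ 2)
    (show x - 3 - 1 < x - 3 by linarith) hrc.continuousOn (fun z _ => hr' z)
  have hsc : 3 ≤ s c := hs3 c (by rcases hc1 with ⟨_, hh⟩; linarith)
  have hwc : ω c < 1 := h.lt_one c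
  have hge : (1 : ℝ) / 2 ≤ ((s c) ^ 2 + 2 * s c - ω c) / (s c) ^ 2 := by
    rw [le_div_iff₀ (by positivity)]
    nlinarith
  have hden : x - 3 - (x - 3 - 1) = (1 : ℝ) := by ring
  rw [hden, div_one] at hc2
  have hr2 : r (x - 3) ≤ 1 / 3 := by
    rw [hrdef]
    simp only
    rw [show (1:ℝ)/3 = (3:ℝ)⁻¹ by norm_num]
    exact inv_anti₀ (by norm_num) (hs3 _ (by linarith))
  have hr1 : 0 < r (x - 3 - 1) := inv_pos.mpr (spos _)
  linarith [hc2 ▸ hge]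


lemma Hyp.dabs (h : Hyp ω) (x : ℝ) : |deriv ω x| ≤ 2 / 3 := by
  rw [abs_of_neg (h.dneg x)]
  have h1 := h.dbound x
  have h2 := h.pos x
  linarith

lemma integrableOn_exp_mul_Iic (b c : ℝ) (hb : 0 < b) :
    IntegrableOn (fun x => exp (b * x)) (Iic c) := by
  refine integrableOn_Iic_of_intervalIntegral_norm_bounded (exp (b * c) / b) c
    (fun i => (continuous_exp.comp (continuous_const.mul continuous_id)).integrableOn_Ioc)
    tendsto_id ?_
  filter_upwards [Iic_mem_atBot c] with y hy
  have hval : (∫ x in y..c, ‖exp (b * x)‖) = (exp (b * c) - exp (b * y)) / b := by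
    simp_rw [norm_of_nonneg (exp_pos _).le]
    rw [intervalIntegral.integral_comp_mul_left (f := exp) (ne_of_gt hb),
      integral_exp, smul_eq_mul]
    field_simp
  simp only [id_eq]
  rw [hval]
  have := exp_pos (b * y)
  gcongr
  linarith

lemma integral_exp_mul_Iic (b c : ℝ) (hb : 0 < b) :
    ∫ x in Iic c, exp (b * x) = exp (b * c) / b := by
  have hderiv : ∀ x ∈ Iic c, HasDerivAt (fun x => exp (b * x) / b) (exp (b * x)) x := by
    intro x _
    have := (((hasDerivAt_id x).const_mul b).exp).div_const b
    refine this.congr_deriv (Eq.symm ?_)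
    field_simp; rfl
  have htend : Tendsto (fun x => exp (b * x) / b) atBot (nhds 0) := by
    have h1 : Tendsto (fun x : ℝ => b * x) atBot atBot :=
      tendsto_id.const_mul_atBot hb
    have := (tendsto_exp_atBot.comp h1).div_const b
    simpa using this
  have := integral_Iic_of_hasDerivAt_of_tendsto' hderiv
    (integrableOn_exp_mul_Iic b c hb) htend
  rw [this]; ring

lemma Hyp.f_int (h : Hyp ω) (c : ℝ) :
    IntegrableOn (fun z => (deriv ω z) ^ 2 * exp (2 * z)) (Iic c) := by
  refine Integrable.mono' ((integrableOn_exp_mul_Iic 2 c two_pos).const_mul (4 / 9))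
    ?_ ?_
  · exact ((h.d2.continuous.pow 2).mul
      (continuous_exp.comp (continuous_const.mul continuous_id))).aestronglyMeasurable
  · refine ae_of_all _ fun z => ?_
    have h1 := h.dabs z
    have h2 := exp_pos (2 * z)
    have h3 : (deriv ω z) ^ 2 ≤ 4 / 9 := by
      calc (deriv ω z) ^ 2 = |deriv ω z| ^ 2 := (sq_abs _).symm
        _ ≤ (2 / 3) ^ 2 := pow_le_pow_left₀ (abs_nonneg _) h1 2
        _ = 4 / 9 := by norm_num
    rw [norm_of_nonneg (by positivity)]
    nlinarith

lemma Hyp.q_mono (h : Hyp ω) {X₀ : ℝ} (hX : ∀ x ≤ X₀, 5 / 6 ≤ ω x) :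
    MonotoneOn (fun x => (deriv ω x) ^ 2 * exp (3 / 2 * x)) (Iic X₀) := by
  have hq' : ∀ x, HasDerivAt (fun x => (deriv ω x) ^ 2 * exp (3 / 2 * x))
      ((2 * deriv (deriv ω) x * deriv ω x + 3 / 2 * (deriv ω x) ^ 2) * exp (3 / 2 * x)) x := by
    intro x
    have h1 : HasDerivAt (fun x => (deriv ω x) ^ 2) (2 * deriv (deriv ω) x * deriv ω x) x := by
      have := ((h.d2 x).hasDerivAt).fun_pow 2
      refine this.congr_deriv (Eq.symm ?_); ring
    have h2 : HasDerivAt (fun x => exp (3 / 2 * x)) (3 / 2 * exp (3 / 2 * x)) x := by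
      have ha : HasDerivAt (fun x : ℝ => 3 / 2 * x) (3 / 2) x := by
        simpa using (hasDerivAt_id x).const_mul (3 / 2 : ℝ)
      have := ha.exp
      convert this using 1; ring
    have := h1.fun_mul h2
    refine this.congr_deriv (Eq.symm ?_); ring
  have hqc : Continuous (fun x => (deriv ω x) ^ 2 * exp (3 / 2 * x)) :=
    continuous_iff_continuousAt.mpr fun x => ((hq' x).differentiableAt).continuousAt
  apply monotoneOn_of_deriv_nonneg (convex_Iic X₀) hqc.continuousOn
    (fun x _ => ((hq' x).differentiableAt).differentiableWithinAt)
  intro x hx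
  rw [interior_Iic, mem_Iio] at hx
  rw [(hq' x).deriv]
  have h1 := h.dbound x
  have h2 := hX x hx.le
  have h3 := h.lt_one x
  have h4 := h.dneg x
  have h5 := exp_pos (3 / 2 * x)
  have hdd : deriv (deriv ω) x = (ω x) ^ 2 - ω x - 2 * deriv ω x := by
    rw [h.dd_eq]
  rw [hdd]
  have ha : 0 < -deriv ω x := neg_pos.mpr h4
  have key2 : 5 / 2 * (-deriv ω x) ≤ 2 * ω x * (1 - ω x) := by
    nlinarith [mul_nonneg (by linarith : (0:ℝ) ≤ 1 - ω x) (by linarith : (0:ℝ) ≤ 2 * ω x - 5 / 3)]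
  have key : 0 ≤ 2 * ((ω x) ^ 2 - ω x - 2 * deriv ω x) * deriv ω x + 3 / 2 * (deriv ω x) ^ 2 := by
    nlinarith [mul_nonneg ha.le (sub_nonneg.mpr key2)]
  positivity


lemma hasDerivAt_integral_Iic {f : ℝ → ℝ} (hc : Continuous f)
    (hint : ∀ y : ℝ, IntegrableOn f (Iic y)) (y : ℝ) :
    HasDerivAt (fun t => ∫ z in Iic t, f z) (f y) y := by
  have hfun : (fun t => ∫ z in Iic t, f z)
      = fun t => (∫ z in (0:ℝ)..t, f z) + ∫ z in Iic (0:ℝ), f z := by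
    funext t
    have := intervalIntegral.integral_Iic_sub_Iic (hint 0) (hint t)
    linarith
  rw [hfun]
  exact (intervalIntegral.integral_hasDerivAt_right
    (hc.intervalIntegrable _ _) (hc.stronglyMeasurableAtFilter _ _) hc.continuousAt).add_const _

/-- the inner integral `G` -/
noncomputable def GG (ω : ℝ → ℝ) (y : ℝ) : ℝ := ∫ z in Iic y, (deriv ω z) ^ 2 * exp (2 * z)

lemma Hyp.f_cont (h : Hyp ω) : Continuous (fun z => (deriv ω z) ^ 2 * exp (2 * z)) :=
  (h.d2.continuous.pow 2).mul (continuous_exp.comp (continuous_const.mul continuous_id))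

lemma Hyp.GG_hasDeriv (h : Hyp ω) (y : ℝ) :
    HasDerivAt (GG ω) ((deriv ω y) ^ 2 * exp (2 * y)) y :=
  hasDerivAt_integral_Iic h.f_cont h.f_int y

lemma Hyp.GG_nonneg (h : Hyp ω) (y : ℝ) : 0 ≤ GG ω y :=
  setIntegral_nonneg measurableSet_Iic fun z _ => by positivity

lemma Hyp.GG_le (h : Hyp ω) {X₀ : ℝ} (hX : ∀ x ≤ X₀, 5 / 6 ≤ ω x) {y : ℝ} (hy : y ≤ X₀) :
    GG ω y ≤ 2 * ((deriv ω y) ^ 2 * exp (2 * y)) := by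
  have hmono := h.q_mono hX
  have hbound : ∀ z ∈ Iic y, (deriv ω z) ^ 2 * exp (2 * z)
      ≤ ((deriv ω y) ^ 2 * exp (3 / 2 * y)) * exp (1 / 2 * z) := by
    intro z hz
    have h1 : (deriv ω z) ^ 2 * exp (3 / 2 * z) ≤ (deriv ω y) ^ 2 * exp (3 / 2 * y) :=
      hmono (mem_Iic.mpr (le_trans hz hy)) (mem_Iic.mpr hy) hz
    have h2 : exp (2 * z) = exp (3 / 2 * z) * exp (1 / 2 * z) := by
      rw [← exp_add]; ring_nf
    rw [h2, ← mul_assoc]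
    have h3 := exp_pos (1 / 2 * z)
    nlinarith [exp_pos (3 / 2 * z)]
  have hint2 : IntegrableOn (fun z => ((deriv ω y) ^ 2 * exp (3 / 2 * y)) * exp (1 / 2 * z))
      (Iic y) := (integrableOn_exp_mul_Iic (1 / 2) y (by norm_num)).const_mul _
  have hle := setIntegral_mono_on (h.f_int y) hint2 measurableSet_Iic hbound
  calc GG ω y ≤ ∫ z in Iic y, ((deriv ω y) ^ 2 * exp (3 / 2 * y)) * exp (1 / 2 * z) := hle
    _ = ((deriv ω y) ^ 2 * exp (3 / 2 * y)) * (exp (1 / 2 * y) / (1 / 2)) := by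
        rw [MeasureTheory.integral_const_mul, integral_exp_mul_Iic (1 / 2) y (by norm_num)]
    _ = 2 * ((deriv ω y) ^ 2 * exp (2 * y)) := by
        rw [show (2:ℝ) * y = 3 / 2 * y + 1 / 2 * y by ring, exp_add]; ring



lemma Hyp.shift (h : Hyp ω) (c : ℝ) : Hyp (fun x => ω (c + x)) := by
  have hds : deriv (fun x => ω (c + x)) = fun x => deriv ω (c + x) :=
    funext fun x => deriv_comp_const_add ω c x
  constructor
  · exact h.smooth.comp (contDiff_const.add contDiff_id)
  · intro x
    rw [hds]
    have : deriv (fun x => deriv ω (c + x)) = fun x => deriv (deriv ω) (c + x) :=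
      funext fun x => deriv_comp_const_add (deriv ω) c x
    rw [this]
    exact h.eq (c + x)
  · exact h.bot.comp (tendsto_atBot_add_const_left _ c tendsto_id)
  · exact h.top.comp (tendsto_atTop_add_const_left _ c tendsto_id)
  · intro x; rw [hds]; exact h.dneg (c + x)


noncomputable def rho (ω : ℝ → ℝ) (y : ℝ) : ℝ := ((deriv ω y) ^ 2 * exp (2 * y))⁻¹ * GG ω y

noncomputable def PsiF (ω : ℝ → ℝ) (x : ℝ) : ℝ :=
  deriv ω x * exp x * ∫ y in (0:ℝ)..x, rho ω y

lemma Hyp.Une (h : Hyp ω) (x : ℝ) : deriv ω x * exp x ≠ 0 :=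
  mul_ne_zero (ne_of_lt (h.dneg x)) (exp_ne_zero x)

lemma sq_exp (d : ℝ → ℝ) (x : ℝ) : (d x) ^ 2 * exp (2 * x) = (d x * exp x) ^ 2 := by
  have h2 : exp (2 * x) = exp x ^ 2 := by rw [sq, ← exp_add]; ring_nf
  rw [h2]; ring

lemma Hyp.GG_cont (h : Hyp ω) : Continuous (GG ω) :=
  continuous_iff_continuousAt.mpr fun y => (h.GG_hasDeriv y).continuousAt

lemma Hyp.fne (h : Hyp ω) (y : ℝ) : (deriv ω y) ^ 2 * exp (2 * y) ≠ 0 :=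
  mul_ne_zero (pow_ne_zero 2 (ne_of_lt (h.dneg y))) (exp_ne_zero _)

lemma Hyp.rho_cont (h : Hyp ω) : Continuous (rho ω) :=
  (h.f_cont.inv₀ h.fne).mul h.GG_cont

lemma Hyp.I_hasDeriv (h : Hyp ω) (x : ℝ) :
    HasDerivAt (fun x => ∫ y in (0:ℝ)..x, rho ω y) (rho ω x) x :=
  intervalIntegral.integral_hasDerivAt_right ((h.rho_cont).intervalIntegrable _ _)
    (h.rho_cont.stronglyMeasurableAtFilter _ _) h.rho_cont.continuousAt

lemma Hyp.dd_at (h : Hyp ω) (x : ℝ) :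
    HasDerivAt (deriv ω) ((ω x) ^ 2 - ω x - 2 * deriv ω x) x := by
  have := (h.d2 x).hasDerivAt
  rwa [show deriv (deriv ω) x = (ω x) ^ 2 - ω x - 2 * deriv ω x from congrFun h.dd_eq x] at this

lemma Hyp.dd3_at (h : Hyp ω) (x : ℝ) :
    HasDerivAt (fun x => (ω x) ^ 2 - ω x - 2 * deriv ω x)
      (2 * ω x * deriv ω x - deriv ω x - 2 * ((ω x) ^ 2 - ω x - 2 * deriv ω x)) x := by
  have hp : HasDerivAt (fun x => (ω x) ^ 2) (2 * ω x * deriv ω x) x := by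
    have := ((h.d1 x).hasDerivAt).fun_pow 2
    refine this.congr_deriv (Eq.symm ?_); ring
  exact (hp.sub (h.d1 x).hasDerivAt).sub ((h.dd_at x).const_mul 2)

lemma Hyp.U_hasDeriv (h : Hyp ω) (x : ℝ) :
    HasDerivAt (fun x => deriv ω x * exp x)
      (((ω x) ^ 2 - ω x - 2 * deriv ω x + deriv ω x) * exp x) x := by
  have := (h.dd_at x).fun_mul (hasDerivAt_exp x)
  refine this.congr_deriv (Eq.symm ?_); ring

lemma Hyp.U'_hasDeriv (h : Hyp ω) (x : ℝ) :
    HasDerivAt (fun x => ((ω x) ^ 2 - ω x - 2 * deriv ω x + deriv ω x) * exp x)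
      (2 * ω x * (deriv ω x * exp x)) x := by
  have hsum := (h.dd3_at x).fun_add (h.dd_at x)
  have := hsum.fun_mul (hasDerivAt_exp x)
  refine this.congr_deriv (Eq.symm ?_); ring

lemma Hyp.Psi_hasDeriv1 (h : Hyp ω) (x : ℝ) :
    HasDerivAt (PsiF ω)
      (((ω x) ^ 2 - ω x - 2 * deriv ω x + deriv ω x) * exp x * (∫ y in (0:ℝ)..x, rho ω y)
        + (deriv ω x * exp x)⁻¹ * GG ω x) x := by
  have hU := h.U_hasDeriv x
  have hI := h.I_hasDeriv x
  have hprod := hU.fun_mul hI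
  have hfe : PsiF ω = fun x => (deriv ω x * exp x) * ∫ y in (0:ℝ)..x, rho ω y := rfl
  rw [hfe]
  refine hprod.congr_deriv (Eq.symm ?_)
  have hne := h.Une x
  rw [rho, sq_exp]
  field_simp

lemma Hyp.Psi_hasDeriv2 (h : Hyp ω) (x : ℝ) :
    HasDerivAt (fun x => ((ω x) ^ 2 - ω x - 2 * deriv ω x + deriv ω x) * exp x
        * (∫ y in (0:ℝ)..x, rho ω y) + (deriv ω x * exp x)⁻¹ * GG ω x)
      (2 * ω x * PsiF ω x + deriv ω x * exp x) x := by
  have hA := (h.U'_hasDeriv x).fun_mul (h.I_hasDeriv x)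
  have hB := ((h.U_hasDeriv x).fun_inv (h.Une x)).fun_mul (h.GG_hasDeriv x)
  have hsum := hA.add hB
  refine hsum.congr_deriv (Eq.symm ?_)
  have hne := h.Une x; have hd0 : deriv ω x ≠ 0 := ne_of_lt (h.dneg x)
  rw [PsiF, rho, sq_exp]
  field_simp
  ring

lemma Hyp.Psi_ode (h : Hyp ω) (x : ℝ) :
    deriv (deriv (PsiF ω)) x - 2 * ω x * PsiF ω x = deriv ω x * exp x := by
  have hd : deriv (PsiF ω) = fun x => ((ω x) ^ 2 - ω x - 2 * deriv ω x + deriv ω x) * exp x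
      * (∫ y in (0:ℝ)..x, rho ω y) + (deriv ω x * exp x)⁻¹ * GG ω x :=
    funext fun x => (h.Psi_hasDeriv1 x).deriv
  rw [hd, (h.Psi_hasDeriv2 x).deriv]
  ring

lemma Psi_zero (ω : ℝ → ℝ) : PsiF ω 0 = 0 := by
  simp [PsiF]

lemma Hyp.rho_nonneg (h : Hyp ω) (y : ℝ) : 0 ≤ rho ω y := by
  have h1 : (0:ℝ) < (deriv ω y) ^ 2 * exp (2 * y) := by
    have := h.dneg y
    have h2 : deriv ω y ≠ 0 := ne_of_lt this
    positivity
  exact mul_nonneg (inv_nonneg.mpr h1.le) (h.GG_nonneg y)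

lemma Hyp.rho_le (h : Hyp ω) {X₀ : ℝ} (hX : ∀ x ≤ X₀, 5 / 6 ≤ ω x) {y : ℝ} (hy : y ≤ X₀) :
    rho ω y ≤ 2 := by
  have h1 := h.GG_le hX hy
  have hpos : (0:ℝ) < (deriv ω y) ^ 2 * exp (2 * y) := by
    have h2 : deriv ω y ≠ 0 := ne_of_lt (h.dneg y)
    positivity
  rw [rho, inv_mul_le_iff₀ hpos]
  linarith

lemma Hyp.X0 (h : Hyp ω) : ∃ X₀ : ℝ, ∀ x ≤ X₀, 5 / 6 ≤ ω x := by
  have hev : ∀ᶠ x in atBot, 5 / 6 ≤ ω x :=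
    h.bot.eventually (eventually_ge_nhds (by norm_num))
  obtain ⟨X₀, hX₀⟩ := eventually_atBot.mp hev
  exact ⟨X₀, hX₀⟩

lemma Hyp.rho_bdd (h : Hyp ω) : ∃ K : ℝ, 0 ≤ K ∧ ∀ y ≤ (0:ℝ), rho ω y ≤ K := by
  obtain ⟨X₀, hX⟩ := h.X0
  set a := min X₀ 0 with ha
  obtain ⟨z, _, hz⟩ := isCompact_Icc.exists_isMaxOn
    (nonempty_Icc.mpr (min_le_right X₀ 0)) (h.rho_cont.continuousOn (s := Icc a 0))
  refine ⟨max 2 (rho ω z), le_trans (by norm_num) (le_max_left _ _), fun y hy => ?_⟩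
  rcases le_or_gt y a with hc | hc
  · exact le_trans (h.rho_le hX (le_trans hc (min_le_left _ _))) (le_max_left _ _)
  · exact le_trans (hz ⟨hc.le, hy⟩) (le_max_right _ _)

lemma Hyp.Psi_bound (h : Hyp ω) : ∃ M : ℝ, ∀ x ≤ (0:ℝ), |PsiF ω x| ≤ M := by
  obtain ⟨K, hK0, hK⟩ := h.rho_bdd
  refine ⟨2 / 3 * K, fun x hx => ?_⟩
  have hIb : |∫ y in (0:ℝ)..x, rho ω y| ≤ K * |x - 0| := by
    rw [← Real.norm_eq_abs]
    apply intervalIntegral.norm_integral_le_of_norm_le_const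
    intro y hy
    have hy0 : y ≤ 0 := by
      have h2 := hy.2
      rwa [max_eq_left hx] at h2
    rw [Real.norm_eq_abs, abs_of_nonneg (h.rho_nonneg y)]
    exact hK y hy0
  have hxe : -x * exp x ≤ 1 := by
    have h1 : -x + 1 ≤ exp (-x) := add_one_le_exp (-x)
    have h2 : exp x * exp (-x) = 1 := by rw [← exp_add]; simp
    have h3 := exp_pos x
    nlinarith
  have hd := h.dabs x
  rw [PsiF, abs_mul, abs_mul, abs_of_pos (exp_pos x)]
  have hxabs : |x - (0:ℝ)| = -x := by rw [sub_zero, abs_of_nonpos hx]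
  rw [hxabs] at hIb
  calc |deriv ω x| * exp x * |∫ y in (0:ℝ)..x, rho ω y|
      ≤ 2 / 3 * exp x * (K * -x) := by
        apply mul_le_mul (mul_le_mul_of_nonneg_right hd (exp_pos x).le) hIb
          (abs_nonneg _) (by positivity)
    _ = 2 / 3 * K * (-x * exp x) := by ring
    _ ≤ 2 / 3 * K * 1 := by
        apply mul_le_mul_of_nonneg_left hxe (by positivity)
    _ = 2 / 3 * K := by ring


noncomputable def JJ (ω : ℝ → ℝ) (x : ℝ) : ℝ :=
  ∫ y in (0:ℝ)..x, ((deriv ω y) ^ 2 * exp (2 * y))⁻¹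

noncomputable def vv (ω : ℝ → ℝ) (x : ℝ) : ℝ := deriv ω x * exp x * JJ ω x

lemma Hyp.finv_cont (h : Hyp ω) : Continuous (fun y => ((deriv ω y) ^ 2 * exp (2 * y))⁻¹) :=
  h.f_cont.inv₀ h.fne

lemma Hyp.J_hasDeriv (h : Hyp ω) (x : ℝ) :
    HasDerivAt (JJ ω) (((deriv ω x) ^ 2 * exp (2 * x))⁻¹) x :=
  intervalIntegral.integral_hasDerivAt_right (h.finv_cont.intervalIntegrable _ _)
    (h.finv_cont.stronglyMeasurableAtFilter _ _) h.finv_cont.continuousAt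

lemma Hyp.v_hasDeriv1 (h : Hyp ω) (x : ℝ) :
    HasDerivAt (vv ω)
      (((ω x) ^ 2 - ω x - 2 * deriv ω x + deriv ω x) * exp x * JJ ω x
        + (deriv ω x * exp x)⁻¹) x := by
  have hprod := (h.U_hasDeriv x).fun_mul (h.J_hasDeriv x)
  have hfe : vv ω = fun x => (deriv ω x * exp x) * JJ ω x := rfl
  rw [hfe]
  refine hprod.congr_deriv (Eq.symm ?_)
  have hne := h.Une x
  rw [sq_exp]
  field_simp

lemma Hyp.v_hasDeriv2 (h : Hyp ω) (x : ℝ) :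
    HasDerivAt (fun x => ((ω x) ^ 2 - ω x - 2 * deriv ω x + deriv ω x) * exp x * JJ ω x
        + (deriv ω x * exp x)⁻¹)
      (2 * ω x * vv ω x) x := by
  have hA := (h.U'_hasDeriv x).fun_mul (h.J_hasDeriv x)
  have hB := (h.U_hasDeriv x).fun_inv (h.Une x)
  have hsum := hA.add hB
  refine hsum.congr_deriv (Eq.symm ?_)
  have hne := h.Une x; have hd0 : deriv ω x ≠ 0 := ne_of_lt (h.dneg x)
  rw [vv, sq_exp]
  field_simp
  ring

lemma lipschitz_aux {c : ℝ} (hc : |c| ≤ 2) :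
    LipschitzWith 2 (fun p : ℝ × ℝ => (p.2, c * p.1)) := by
  apply LipschitzWith.of_dist_le_mul
  intro p q
  rw [Prod.dist_eq, Prod.dist_eq]
  simp only [Real.dist_eq]
  push_cast
  have hM1 : |p.1 - q.1| ≤ max |p.1 - q.1| |p.2 - q.2| := le_max_left _ _
  have hM2 : |p.2 - q.2| ≤ max |p.1 - q.1| |p.2 - q.2| := le_max_right _ _
  have hM0 : 0 ≤ max |p.1 - q.1| |p.2 - q.2| := le_trans (abs_nonneg _) hM1
  apply max_le
  · linarith
  · rw [show c * p.1 - c * q.1 = c * (p.1 - q.1) by ring, abs_mul]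
    nlinarith [abs_nonneg (p.1 - q.1), abs_nonneg c]

lemma ode_unique (ω : ℝ → ℝ) (hω : ∀ t, 0 < ω t ∧ ω t < 1)
    {f g f' g' : ℝ → ℝ}
    (hf : ∀ t, HasDerivAt f (f' t) t) (hf' : ∀ t, HasDerivAt f' (2 * ω t * f t) t)
    (hg : ∀ t, HasDerivAt g (g' t) t) (hg' : ∀ t, HasDerivAt g' (2 * ω t * g t) t)
    (h0 : f 0 = g 0) (h0' : f' 0 = g' 0) : ∀ x, f x = g x := by
  intro x
  set F : ℝ → ℝ × ℝ := fun t => (f t, f' t) with hF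
  set G : ℝ → ℝ × ℝ := fun t => (g t, g' t) with hG
  set v : ℝ → ℝ × ℝ → ℝ × ℝ := fun t p => (p.2, 2 * ω t * p.1) with hv
  have hlip : ∀ t, LipschitzOnWith 2 (v t) univ := by
    intro t
    apply LipschitzWith.lipschitzOnWith
    apply lipschitz_aux
    rw [abs_of_pos (by linarith [(hω t).1])]
    linarith [(hω t).2]
  have hFd : ∀ t, HasDerivAt F (v t (F t)) t := fun t => (hf t).prodMk (hf' t)
  have hGd : ∀ t, HasDerivAt G (v t (G t)) t := fun t => (hg t).prodMk (hg' t)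
  have h00 : F 0 = G 0 := Prod.ext h0 h0'
  have hmem : (0:ℝ) ∈ Ioo (-(|x| + 1)) (|x| + 1) := by
    constructor <;> nlinarith [abs_nonneg x]
  have key := ODE_solution_unique_of_mem_Icc (v := v) (s := fun _ => univ) (fun t _ => hlip t) hmem
    (fun t _ => (hFd t).continuousAt.continuousWithinAt)
    (fun t _ => hFd t) (fun t _ => mem_univ _)
    (fun t _ => (hGd t).continuousAt.continuousWithinAt)
    (fun t _ => hGd t) (fun t _ => mem_univ _) h00
  have hx : x ∈ Icc (-(|x| + 1)) (|x| + 1) := by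
    constructor
    · linarith [neg_abs_le x]
    · linarith [le_abs_self x]
  have := key hx
  exact congrArg Prod.fst this

lemma Hyp.v_unbounded (h : Hyp ω) {c0 : ℝ} (hc0 : 0 < c0)
    (hb : ∀ x ≤ (0:ℝ), |vv ω x| ≤ c0) : False := by
  set F1 : ℝ → ℝ := fun x => -JJ ω x with hF1
  have hF1d : ∀ x, HasDerivAt F1 (-((deriv ω x) ^ 2 * exp (2 * x))⁻¹) x :=
    fun x => (h.J_hasDeriv x).neg
  have hfpos : ∀ y : ℝ, (0:ℝ) < ((deriv ω y) ^ 2 * exp (2 * y))⁻¹ := by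
    intro y
    have h2 : deriv ω y ≠ 0 := ne_of_lt (h.dneg y)
    positivity
  have hF1pos : ∀ x < (0:ℝ), 0 < F1 x := by
    intro x hx
    have he : F1 x = ∫ y in x..(0:ℝ), ((deriv ω y) ^ 2 * exp (2 * y))⁻¹ := by
      show -JJ ω x = _
      rw [show JJ ω x = ∫ y in (0:ℝ)..x, ((deriv ω y) ^ 2 * exp (2 * y))⁻¹ from rfl,
        ← intervalIntegral.integral_symm]
    rw [he]
    exact intervalIntegral.intervalIntegral_pos_of_pos
      (h.finv_cont.intervalIntegrable _ _) hfpos hx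
  set R : ℝ → ℝ := fun x => (F1 x)⁻¹ with hR
  have hRd : ∀ x < (0:ℝ), HasDerivAt R (((deriv ω x) ^ 2 * exp (2 * x))⁻¹ / (F1 x) ^ 2) x := by
    intro x hx
    have := (hF1d x).fun_inv (ne_of_gt (hF1pos x hx))
    refine this.congr_deriv (Eq.symm ?_)
    field_simp
  have hRlow : ∀ x < (0:ℝ), 1 / c0 ^ 2 ≤ ((deriv ω x) ^ 2 * exp (2 * x))⁻¹ / (F1 x) ^ 2 := by
    intro x hx
    have hvb := hb x hx.le
    have hJx : |JJ ω x| = F1 x := by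
      have he : JJ ω x = -F1 x := by rw [hF1]; ring
      rw [he, abs_neg, abs_of_pos (hF1pos x hx)]
    have hUF : (deriv ω x * exp x) ^ 2 * (F1 x) ^ 2 ≤ c0 ^ 2 := by
      have habs : |deriv ω x * exp x| * F1 x ≤ c0 := by
        rw [← hJx, ← abs_mul]; exact hvb
      have hnn : 0 ≤ |deriv ω x * exp x| * F1 x :=
        mul_nonneg (abs_nonneg _) (hF1pos x hx).le
      have hsq2 : (|deriv ω x * exp x| * F1 x) ^ 2 ≤ c0 ^ 2 := pow_le_pow_left₀ hnn habs 2
      rw [mul_pow, sq_abs] at hsq2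
      exact hsq2
    have hU2 : (0:ℝ) < (deriv ω x * exp x) ^ 2 :=
      lt_of_le_of_ne (sq_nonneg _) (Ne.symm (pow_ne_zero 2 (h.Une x)))
    have hprodpos : (0:ℝ) < (deriv ω x * exp x) ^ 2 * (F1 x) ^ 2 :=
      mul_pos hU2 (pow_pos (hF1pos x hx) 2)
    have hgoal : ((deriv ω x) ^ 2 * exp (2 * x))⁻¹ / F1 x ^ 2
        = ((deriv ω x * exp x) ^ 2 * F1 x ^ 2)⁻¹ := by
      rw [sq_exp (deriv ω) x, mul_inv, div_eq_mul_inv]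
    rw [hgoal, one_div]
    exact inv_anti₀ hprodpos hUF
  have hR1pos : 0 < R (-1) := inv_pos.mpr (hF1pos _ (by norm_num))
  set xs : ℝ := -2 - c0 ^ 2 * R (-1) with hxs
  have hxslt : xs < -1 := by
    have : 0 < c0 ^ 2 * R (-1) := mul_pos (pow_pos hc0 2) hR1pos
    rw [hxs]; linarith
  obtain ⟨c, hc1, hc2⟩ := exists_hasDerivAt_eq_slope R
    (fun x => ((deriv ω x) ^ 2 * exp (2 * x))⁻¹ / (F1 x) ^ 2) hxslt
    (fun z hz => ((hRd z (lt_of_le_of_lt hz.2 (by norm_num))).continuousAt).continuousWithinAt)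
    (fun z hz => hRd z (lt_trans hz.2 (by norm_num)))
  have hclow : 1 / c0 ^ 2 ≤ (R (-1) - R xs) / (-1 - xs) := by
    rw [← hc2]
    exact hRlow c (lt_trans hc1.2 (by norm_num))
  have hRxs : 0 < R xs := inv_pos.mpr (hF1pos _ (by linarith))
  rw [le_div_iff₀ (by linarith)] at hclow
  have hc2pos : (0:ℝ) < c0 ^ 2 := pow_pos hc0 2
  have hkey : (1:ℝ) / c0 ^ 2 * (-1 - xs) = 1 / c0 ^ 2 + R (-1) := by
    rw [hxs]; field_simp; ring
  rw [hkey] at hclow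
  have h1c : (0:ℝ) < 1 / c0 ^ 2 := by positivity
  linarith

lemma Hyp.unique (h : Hyp ω) (Ψ₂ : ℝ → ℝ) (h2 : ContDiff ℝ 2 Ψ₂)
    (hode : ∀ x, deriv (deriv Ψ₂) x - 2 * ω x * Ψ₂ x = deriv ω x * exp x)
    (h0 : Ψ₂ 0 = 0) (hbd : ∃ M, ∀ x ≤ (0:ℝ), |Ψ₂ x| ≤ M) : Ψ₂ = PsiF ω := by
  have h2d1 : Differentiable ℝ Ψ₂ := h2.differentiable two_ne_zero
  have h2d2 : Differentiable ℝ (deriv Ψ₂) :=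
    (((contDiff_succ_iff_deriv (n := 1)).mp (by exact_mod_cast h2)).2.2).differentiable one_ne_zero
  set P' : ℝ → ℝ := fun x => ((ω x) ^ 2 - ω x - 2 * deriv ω x + deriv ω x) * exp x
      * (∫ y in (0:ℝ)..x, rho ω y) + (deriv ω x * exp x)⁻¹ * GG ω x with hP'
  set D : ℝ → ℝ := fun x => Ψ₂ x - PsiF ω x with hD
  set D' : ℝ → ℝ := fun x => deriv Ψ₂ x - P' x with hD'
  have hDd : ∀ x, HasDerivAt D (D' x) x := fun x =>
    ((h2d1 x).hasDerivAt).sub (h.Psi_hasDeriv1 x)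
  have hDd' : ∀ x, HasDerivAt D' (2 * ω x * D x) x := by
    intro x
    have hx2 := ((h2d2 x).hasDerivAt).sub (h.Psi_hasDeriv2 x)
    refine hx2.congr_deriv (Eq.symm ?_)
    have hox := hode x
    simp only [hD]
    ring_nf
    ring_nf at hox ⊢
    linarith
  set b : ℝ := D' 0 * (deriv ω 0 * exp 0) with hbdef
  set Z : ℝ → ℝ := fun x => b * vv ω x with hZ
  set Z' : ℝ → ℝ := fun x => b * (((ω x) ^ 2 - ω x - 2 * deriv ω x + deriv ω x) * exp x * JJ ω x
      + (deriv ω x * exp x)⁻¹) with hZ'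
  have hZd : ∀ x, HasDerivAt Z (Z' x) x := fun x => (h.v_hasDeriv1 x).const_mul b
  have hZd' : ∀ x, HasDerivAt Z' (2 * ω x * Z x) x := by
    intro x
    have := (h.v_hasDeriv2 x).const_mul b
    refine this.congr_deriv (Eq.symm ?_)
    simp only [hZ]
    ring
  have hD0 : D 0 = 0 := by simp [hD, h0, Psi_zero]
  have hJJ0 : JJ ω 0 = 0 := by simp [JJ]
  have hZ0 : Z 0 = 0 := by simp [hZ, vv, hJJ0]
  have hZ'0 : Z' 0 = D' 0 := by
    have hne := h.Une 0
    have hne2 : deriv ω 0 ≠ 0 := ne_of_lt (h.dneg 0)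
    simp only [hZ', hbdef, hJJ0]
    field_simp; simp
  have heq : ∀ x, D x = Z x :=
    ode_unique ω (fun t => ⟨h.pos t, h.lt_one t⟩) hDd hDd' hZd hZd'
      (hD0.trans hZ0.symm) hZ'0.symm
  by_cases hb0 : b = 0
  · funext x
    have hx := heq x
    rw [hZ] at hx
    simp only [hb0, zero_mul] at hx
    have : Ψ₂ x - PsiF ω x = 0 := hx
    linarith
  · exfalso
    obtain ⟨M₂, hM₂⟩ := hbd
    obtain ⟨M₁, hM₁⟩ := h.Psi_bound
    set MD : ℝ := |M₂| + |M₁| + 1 with hMD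
    have hMDpos : 0 < MD := by positivity
    have hbabs : 0 < |b| := abs_pos.mpr hb0
    refine h.v_unbounded (div_pos hMDpos hbabs) fun x hx => ?_
    have hDx : |D x| ≤ MD := by
      simp only [hD]
      calc |Ψ₂ x - PsiF ω x| ≤ |Ψ₂ x| + |PsiF ω x| := abs_sub _ _
        _ ≤ M₂ + M₁ := add_le_add (hM₂ x hx) (hM₁ x hx)
        _ ≤ MD := by rw [hMD]; linarith [le_abs_self M₂, le_abs_self M₁]
    rw [le_div_iff₀ hbabs]
    calc |vv ω x| * |b| = |b| * |vv ω x| := mul_comm _ _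
      _ = |b * vv ω x| := (abs_mul b (vv ω x)).symm
      _ = |D x| := by rw [heq x]
      _ ≤ MD := hDx


lemma Hyp.GG_shift (h : Hyp ω) (Wα : ℝ) (y : ℝ) :
    GG (fun z => ω (Wα + z)) y = exp (-(2 * Wα)) * GG ω (Wα + y) := by
  have hds : deriv (fun z => ω (Wα + z)) = fun z => deriv ω (Wα + z) :=
    funext fun z => deriv_comp_const_add ω Wα z
  have hmp : MeasurePreserving (fun z : ℝ => Wα + z) volume volume :=
    measurePreserving_add_left volume Wα
  have hme : MeasurableEmbedding (fun z : ℝ => Wα + z) := measurableEmbedding_addLeft Wα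
  have hpre : (fun z : ℝ => Wα + z) ⁻¹' (Iic (Wα + y)) = Iic y := by
    ext z; simp
  have hint := hmp.setIntegral_preimage_emb hme
    (fun z => (deriv ω z) ^ 2 * exp (2 * z)) (Iic (Wα + y))
  rw [hpre] at hint
  have hfe : (fun z => (deriv ω (Wα + z)) ^ 2 * exp (2 * z))
      = fun z => exp (-(2 * Wα)) * ((deriv ω (Wα + z)) ^ 2 * exp (2 * (Wα + z))) := by
    funext z
    rw [show (2:ℝ) * z = -(2 * Wα) + 2 * (Wα + z) by ring, Real.exp_add]
    ring
  calc GG (fun z => ω (Wα + z)) y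
      = ∫ z in Iic y, (deriv ω (Wα + z)) ^ 2 * exp (2 * z) := by
        simp only [GG, hds]
    _ = ∫ z in Iic y, exp (-(2 * Wα)) * ((deriv ω (Wα + z)) ^ 2 * exp (2 * (Wα + z))) := by
        rw [hfe]
    _ = exp (-(2 * Wα)) * ∫ z in Iic y, (deriv ω (Wα + z)) ^ 2 * exp (2 * (Wα + z)) :=
        integral_const_mul _ _
    _ = exp (-(2 * Wα)) * GG ω (Wα + y) := by rw [hint]; rfl

lemma Hyp.phi_id (h : Hyp ω) (Wα : ℝ) (Φ : ℝ → ℝ)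
    (hΦ : ∀ t, Φ t = deriv ω t *
      ∫ y in (0:ℝ)..t, (exp (-(2 * y)) / (deriv ω y) ^ 2) * GG ω y) (x : ℝ) :
    PsiF (fun z => ω (Wα + z)) x
      = exp x * (Φ (Wα + x) - Φ Wα / deriv ω Wα * deriv ω (Wα + x)) := by
  have hds : deriv (fun z => ω (Wα + z)) = fun z => deriv ω (Wα + z) :=
    funext fun z => deriv_comp_const_add ω Wα z
  set F₂ : ℝ → ℝ := fun t => (exp (-(2 * t)) / (deriv ω t) ^ 2) * GG ω t with hF₂
  have hF₂c : Continuous F₂ := by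
    apply Continuous.mul _ h.GG_cont
    apply Continuous.div (continuous_exp.comp (by continuity))
      (h.d2.continuous.pow 2)
    intro t
    exact pow_ne_zero 2 (ne_of_lt (h.dneg t))
  have hrho : ∀ y : ℝ, rho (fun z => ω (Wα + z)) y = F₂ (Wα + y) := by
    intro y
    have hd0 : deriv ω (Wα + y) ≠ 0 := ne_of_lt (h.dneg (Wα + y))
    have he0 : exp (2 * y) ≠ 0 := exp_ne_zero _
    have hexp : exp (-(2 * (Wα + y))) = exp (-(2 * Wα)) * (exp (2 * y))⁻¹ := by
      rw [← Real.exp_neg, ← Real.exp_add]; ring_nf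
    simp only [rho, hds, h.GG_shift Wα y, hF₂, hexp]
    rw [mul_inv, div_eq_mul_inv]
    ring
  have houter : (∫ y in (0:ℝ)..x, rho (fun z => ω (Wα + z)) y)
      = (∫ y in (0:ℝ)..(Wα + x), F₂ y) - ∫ y in (0:ℝ)..Wα, F₂ y := by
    have h1 : (∫ y in (0:ℝ)..x, rho (fun z => ω (Wα + z)) y)
        = ∫ y in (0:ℝ)..x, F₂ (Wα + y) := by
      simp only [hrho]
    rw [h1, intervalIntegral.integral_comp_add_left F₂ Wα, add_zero]
    exact (intervalIntegral.integral_interval_sub_left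
      (hF₂c.intervalIntegrable _ _) (hF₂c.intervalIntegrable _ _)).symm
  rw [PsiF, hds, houter, hΦ (Wα + x), hΦ Wα]
  have hdW : deriv ω Wα ≠ 0 := ne_of_lt (h.dneg Wα)
  field_simp

end S17

open Filter Asymptotics MeasureTheory intervalIntegral Set

theorem stmt_17
    (ω : ℝ → ℝ)
    (hω_smooth : ContDiff ℝ 2 ω)
    (hω_eq : ∀ x, deriv (deriv ω) x + 2 * deriv ω x + ω x - (ω x) ^ 2 = 0)
    (hω_bot : Tendsto ω atBot (nhds 1))
    (hω_top : Tendsto ω atTop (nhds 0))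
    (hω_half : ω 0 = 1 / 2)
    (hω_deriv : ∀ x, deriv ω x < 0)
    (α : ℝ) (hα : α ∈ Set.Ioo (0 : ℝ) 1)
    (Wα : ℝ) (hWα : ω Wα = α)
    (Φ : ℝ → ℝ)
    (hΦ : ∀ x, Φ x = deriv ω x *
      ∫ y in (0:ℝ)..x, (Real.exp (-(2 * y)) / (deriv ω y) ^ 2) *
        ∫ z in Set.Iic y, (deriv ω z) ^ 2 * Real.exp (2 * z))
    (Ψ : ℝ → ℝ)
    (hΨ : ∀ x, Ψ x = deriv ω (Wα + x) * Real.exp x *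
      ∫ y in (0:ℝ)..x, ((deriv ω (Wα + y)) ^ 2 * Real.exp (2 * y))⁻¹ *
        ∫ z in Set.Iic y, (deriv ω (Wα + z)) ^ 2 * Real.exp (2 * z)) :
    (∀ x, deriv (deriv Ψ) x - 2 * ω (Wα + x) * Ψ x = deriv ω (Wα + x) * Real.exp x) ∧
    Ψ 0 = 0 ∧
    (∃ M : ℝ, ∀ x ≤ (0:ℝ), |Ψ x| ≤ M) ∧
    (∀ Ψ₂ : ℝ → ℝ, ContDiff ℝ 2 Ψ₂ →
      (∀ x, deriv (deriv Ψ₂) x - 2 * ω (Wα + x) * Ψ₂ x = deriv ω (Wα + x) * Real.exp x) →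
      Ψ₂ 0 = 0 → (∃ M : ℝ, ∀ x ≤ (0:ℝ), |Ψ₂ x| ≤ M) → Ψ₂ = Ψ) ∧
    (∀ x, Ψ x = Real.exp x *
      (Φ (Wα + x) - Φ Wα / deriv ω Wα * deriv ω (Wα + x))) := by
  have h : S17.Hyp ω := ⟨hω_smooth, hω_eq, hω_bot, hω_top, hω_deriv⟩
  have ht : S17.Hyp (fun x => ω (Wα + x)) := h.shift Wα
  have hds : deriv (fun x => ω (Wα + x)) = fun x => deriv ω (Wα + x) :=
    funext fun x => deriv_comp_const_add ω Wα x
  have hΨeq : Ψ = S17.PsiF (fun x => ω (Wα + x)) := by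
    funext x
    rw [hΨ x]
    simp only [S17.PsiF, S17.rho, S17.GG, hds]
  refine ⟨?_, ?_, ?_, ?_, ?_⟩
  · intro x
    have hode := ht.Psi_ode x
    rw [hΨeq]
    simpa only [hds] using hode
  · rw [hΨeq]; exact S17.Psi_zero _
  · rw [hΨeq]; exact ht.Psi_bound
  · intro Ψ₂ h2 hode h20 hbd2
    rw [hΨeq]
    apply ht.unique Ψ₂ h2 _ h20 hbd2
    intro x
    simp only [hds]
    exact hode x
  · intro x
    rw [hΨeq]
    exact h.phi_id Wα Φ (fun t => hΦ t) x
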